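/- Work in the ℚ[[t]]-extension of the bracket [·,·]~, where elements are allowed to be infinite formal sums Σ_{m∈ℕ²} z^m·(A_m(t), n_m(t)) with matrix and vector parts having coefficients in t·ℚ[[t]] (all brackets below produce only finitely many terms in each fixed power of t and each fixed monomial z^m, so they are well defined). Let γ = (0,1), m = (1,0), n = (−1,0) (so ⟨γ,n⟩ = 0 and ⟨m,n⟩ = −1), fix i ≠ j, and set k := (0, Σ_{l≥1} (t^l/l)·n)·z^{lγ} (i.e. k = Σ_{l≥1} z^{lγ}·(0, (t^l/l)·n)) and s := (−t·E_{ij}, 0)·z^m. Then Σ_{l≥0} (1/l!)·ad_k^l(s) = s + (t²·E_{ij}, 0)·z^{m+γ}, where ad_k(x) := [k,x]~. (Via the Baker–Campbell–Hausdorff formula this is exactly the consistency of the Example-1 scattering diagram, i.e. the 2d–4d wall-crossing formula K_γ^ω ∘ S_{γ_{ij}}^μ = S_{γ_{ij}}^{μ'} ∘ S_{γ_{ij}+γ}^{μ'} ∘ K_γ^{ω'} with ω(γ,γ_{ij}) = −1, μ(γ_{ij}) = 1, μ'(γ+γ_{ij}) = −1.) -/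

import Mathlib

open PowerSeries

/-- Coefficients: pairs `(A(t), n(t))` with `A(t) ∈ gl(r,ℚ[[t]])` and
`n(t) ∈ ℚ[[t]]²`. -/
abbrev tvCoefQ (r : ℕ) := Matrix (Fin r) (Fin r) (PowerSeries ℚ) × (Fin 2 → PowerSeries ℚ)

/-- Formal sums `Σ_{m ∈ ℕ²} z^m · (A_m(t), n_m(t))`. -/
abbrev tvFormal (r : ℕ) := ℕ × ℕ → tvCoefQ r

/-- The pairing `⟨m,n⟩ = m₁n₁ + m₂n₂` between `ℕ²` and `ℚ[[t]]²`. -/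
noncomputable def pairQ (m : ℕ × ℕ) (n : Fin 2 → PowerSeries ℚ) : PowerSeries ℚ :=
  (m.1 : PowerSeries ℚ) * n 0 + (m.2 : PowerSeries ℚ) * n 1

/-- The extended tropical vertex bracket on pure coefficients:
`[(A,n)z^m,(A',n')z^{m'}] = ([A,A'] + ⟨m',n⟩A' − ⟨m,n'⟩A, ⟨m',n⟩n' − ⟨m,n'⟩n)`. -/
noncomputable def coefBrQ {r : ℕ} (v : tvCoefQ r) (m : ℕ × ℕ)
    (v' : tvCoefQ r) (m' : ℕ × ℕ) : tvCoefQ r :=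
  (v.1 * v'.1 - v'.1 * v.1 + pairQ m' v.2 • v'.1 - pairQ m v'.2 • v.1,
   pairQ m' v.2 • v'.2 - pairQ m v'.2 • v.2)

/-- The bracket `[·,·]~` extended to formal sums over monomials `z^m`, `m ∈ ℕ²`:
the `z^m`-coefficient of `[x,y]~` is the (finite) convolution sum
`Σ_{m'+m''=m} [x_{m'} z^{m'}, y_{m''} z^{m''}]~`. -/
noncomputable def brFormal {r : ℕ} (x y : tvFormal r) : tvFormal r := fun m =>
  ∑ p ∈ Finset.range (m.1 + 1) ×ˢ Finset.range (m.2 + 1),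
    coefBrQ (x p) p (y (m.1 - p.1, m.2 - p.2)) (m.1 - p.1, m.2 - p.2)

/-- `k = Σ_{l≥1} z^{lγ}·(0, (t^l/l)·n)` with `γ = (0,1)`, `n = (−1,0)`. -/
noncomputable def kElt (r : ℕ) : tvFormal r := fun m =>
  if m.1 = 0 ∧ 1 ≤ m.2 then
    (0, ![-((m.2 : ℚ)⁻¹ • (PowerSeries.X : PowerSeries ℚ) ^ m.2), 0])
  else 0

/-- `s = (−t·E_{ij}, 0)·z^m` with `m = (1,0)`. -/
noncomputable def sElt (r : ℕ) (i j : Fin r) : tvFormal r := fun m =>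
  if m = (1, 0) then
    (-((PowerSeries.X : PowerSeries ℚ) • Matrix.single i j 1), 0)
  else 0


noncomputable def sseq : ℕ → ℕ → ℚ
  | 0, 0 => 1
  | 0, _+1 => 0
  | l+1, c => ∑ b ∈ Finset.Icc 1 c, (b : ℚ)⁻¹ * sseq l (c - b)

lemma sseq_succ (l c : ℕ) :
    sseq (l+1) c = ∑ b ∈ Finset.Icc 1 c, (b : ℚ)⁻¹ * sseq l (c - b) := rfl

lemma sseq_eq_zero_of_lt : ∀ l c, c < l → sseq l c = 0 := by
  intro l
  induction l with
  | zero => omega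
  | succ l ih =>
    intro c hc
    rw [sseq_succ]
    apply Finset.sum_eq_zero
    intro b hb
    simp only [Finset.mem_Icc] at hb
    rw [ih (c - b) (by omega), mul_zero]

lemma sum_Icc_inv (f : ℕ → ℚ) (c : ℕ) :
    ∑ b ∈ Finset.Icc 1 c, f (c - b) = ∑ d ∈ Finset.range c, f d := by
  apply Finset.sum_nbij' (fun b => c - b) (fun d => c - d)
  · intro b hb; simp only [Finset.mem_Icc] at hb; simp only [Finset.mem_range]; omega
  · intro d hd; simp only [Finset.mem_range] at hd; simp only [Finset.mem_Icc]; omega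
  · intro b hb; simp only [Finset.mem_Icc] at hb; omega
  · intro d hd; simp only [Finset.mem_range] at hd; omega
  · intro b hb; rfl

lemma sseq_deriv : ∀ l c : ℕ, ((c:ℚ)+1) * sseq l (c+1) = (c:ℚ) * sseq l c + (l:ℚ) * sseq (l-1) c := by
  intro l
  induction l with
  | zero =>
    intro c
    cases c with
    | zero => simp [sseq]
    | succ c => simp [sseq]
  | succ l ih =>
    intro c
    rw [sseq_succ, Finset.mul_sum]
    have key : ∀ b ∈ Finset.Icc 1 (c+1),
        ((c:ℚ)+1) * ((b:ℚ)⁻¹ * sseq l (c+1-b)) =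
          sseq l (c+1-b) + (b:ℚ)⁻¹ * (((c+1-b : ℕ):ℚ) * sseq l (c+1-b)) := by
      intro b hb
      simp only [Finset.mem_Icc] at hb
      have hb0 : ((b:ℚ)) ≠ 0 := by exact_mod_cast (by omega : b ≠ 0)
      have hcast : ((c+1-b : ℕ):ℚ) = (c:ℚ) + 1 - (b:ℚ) := by
        have : ((c+1-b : ℕ):ℚ) + (b:ℚ) = (c:ℚ) + 1 := by
          rw [← Nat.cast_add]; norm_cast; omega
        linarith
      rw [hcast]
      field_simp
      ring
    rw [Finset.sum_congr rfl key, Finset.sum_add_distrib]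
    have h1 : ∑ b ∈ Finset.Icc 1 (c+1), sseq l (c+1-b) = ∑ d ∈ Finset.range (c+1), sseq l d :=
      sum_Icc_inv _ _
    have h2 : ∑ b ∈ Finset.Icc 1 (c+1), (b:ℚ)⁻¹ * (((c+1-b : ℕ):ℚ) * sseq l (c+1-b)) =
        ∑ b ∈ Finset.Icc 1 c, (b:ℚ)⁻¹ * (((c-b : ℕ):ℚ) * sseq l (c-b) + (l:ℚ) * sseq (l-1) (c-b)) := by
      rw [Finset.sum_Icc_succ_top (by omega : 1 ≤ c+1)]
      simp only [Nat.sub_self, Nat.cast_zero, zero_mul, mul_zero, add_zero]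
      apply Finset.sum_congr rfl
      intro b hb
      simp only [Finset.mem_Icc] at hb
      have he : c + 1 - b = (c - b) + 1 := by omega
      rw [he]
      congr 1
      have := ih (c - b)
      push_cast at this ⊢
      linarith
    rw [h1, h2]
    have h3 : ∑ b ∈ Finset.Icc 1 c, (b:ℚ)⁻¹ *
          (((c-b : ℕ):ℚ) * sseq l (c-b) + (l:ℚ) * sseq (l-1) (c-b)) =
        (∑ b ∈ Finset.Icc 1 c, (b:ℚ)⁻¹ * ((c-b : ℕ):ℚ) * sseq l (c-b)) + (l:ℚ) * sseq l c := by
      simp only [mul_add, Finset.sum_add_distrib]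
      congr 1
      · apply Finset.sum_congr rfl; intro b hb; ring
      · cases l with
        | zero => simp
        | succ l' =>
          rw [sseq_succ, Finset.mul_sum]
          apply Finset.sum_congr rfl
          intro b hb
          simp only [Nat.add_sub_cancel]
          ring
    rw [h3]
    -- goal now: range-sum + (Σ b⁻¹(c-b)s(c-b)) + l s_l c = c * sseq(l+1) c + (l+1) sseq l c
    have h4 : ∑ d ∈ Finset.range (c+1), sseq l d =
        sseq l c + ∑ b ∈ Finset.Icc 1 c, sseq l (c - b) := by
      rw [Finset.sum_range_succ, sum_Icc_inv]
      ring
    rw [h4, sseq_succ, Finset.mul_sum]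
    have h5 : ∀ b ∈ Finset.Icc 1 c,
        sseq l (c - b) + (b:ℚ)⁻¹ * ((c-b : ℕ):ℚ) * sseq l (c-b) =
          (c:ℚ) * ((b:ℚ)⁻¹ * sseq l (c - b)) := by
      intro b hb
      simp only [Finset.mem_Icc] at hb
      have hb0 : ((b:ℚ)) ≠ 0 := by exact_mod_cast (by omega : b ≠ 0)
      have hcast : ((c-b : ℕ):ℚ) = (c:ℚ) - (b:ℚ) := by
        have : ((c-b : ℕ):ℚ) + (b:ℚ) = (c:ℚ) := by rw [← Nat.cast_add]; norm_cast; omega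
        linarith
      rw [hcast]
      field_simp
      ring
    have h6 : ∑ b ∈ Finset.Icc 1 c, sseq l (c - b) +
        ∑ b ∈ Finset.Icc 1 c, (b:ℚ)⁻¹ * ((c-b : ℕ):ℚ) * sseq l (c-b) =
        ∑ b ∈ Finset.Icc 1 c, (c:ℚ) * ((b:ℚ)⁻¹ * sseq l (c - b)) := by
      rw [← Finset.sum_add_distrib]
      exact Finset.sum_congr rfl h5
    push_cast
    linarith

/-- `Fc c` = coefficient of `x^c` in `exp(log(1-x))`. -/
noncomputable def Fc (c : ℕ) : ℚ :=
  ∑ l ∈ Finset.range (c+1), ((-1)^l / l.factorial) * sseq l c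

lemma Fc_rec (c : ℕ) : ((c:ℚ)+1) * Fc (c+1) = ((c:ℚ)-1) * Fc c := by
  have lhs : ((c:ℚ)+1) * Fc (c+1) =
      ∑ l ∈ Finset.range (c+2), ((c:ℚ)+1) * ((-1)^l / l.factorial * sseq l (c+1)) := by
    unfold Fc; rw [Finset.mul_sum]
  rw [lhs]
  have key : ∀ l ∈ Finset.range (c+2),
      ((c:ℚ)+1) * ((-1)^l / l.factorial * sseq l (c+1)) =
        (c:ℚ) * ((-1)^l / l.factorial * sseq l c) +
          (-1)^l / l.factorial * ((l:ℚ) * sseq (l-1) c) := by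
    intro l _
    have := sseq_deriv l c
    calc ((c:ℚ)+1) * ((-1)^l / l.factorial * sseq l (c+1))
        = (-1)^l / l.factorial * (((c:ℚ)+1) * sseq l (c+1)) := by ring
      _ = (-1)^l / l.factorial * ((c:ℚ) * sseq l c + (l:ℚ) * sseq (l-1) c) := by rw [this]
      _ = _ := by ring
  rw [Finset.sum_congr rfl key, Finset.sum_add_distrib]
  have hA : ∑ l ∈ Finset.range (c+2), (c:ℚ) * ((-1)^l / l.factorial * sseq l c) =
      (c:ℚ) * Fc c := by
    rw [Finset.sum_range_succ, sseq_eq_zero_of_lt (c+1) c (by omega)]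
    unfold Fc
    rw [Finset.mul_sum]
    simp
  have hB : ∑ l ∈ Finset.range (c+2), (-1)^l / l.factorial * ((l:ℚ) * sseq (l-1) c) =
      -Fc c := by
    rw [Finset.sum_range_succ']
    simp only [Nat.cast_zero, zero_mul, mul_zero, add_zero]
    unfold Fc
    rw [← Finset.sum_neg_distrib]
    apply Finset.sum_congr rfl
    intro l _
    have hfac : ((l+1 : ℕ).factorial : ℚ) = ((l+1 : ℕ):ℚ) * (l.factorial : ℚ) := by
      rw [Nat.factorial_succ]; push_cast; ring
    simp only [Nat.add_sub_cancel, pow_succ, hfac]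
    have hl1 : ((l:ℚ)+1) ≠ 0 := by positivity
    have hf : ((l.factorial : ℚ)) ≠ 0 := by exact_mod_cast l.factorial_ne_zero
    field_simp
  rw [hA, hB]
  ring

lemma Fc_zero : Fc 0 = 1 := by simp [Fc, sseq]

lemma Fc_one : Fc 1 = -1 := by
  have := Fc_rec 0
  rw [Fc_zero] at this
  push_cast at this
  linarith

lemma Fc_eq_zero (c : ℕ) (hc : 2 ≤ c) : Fc c = 0 := by
  induction c with
  | zero => omega
  | succ c ih =>
    rcases Nat.lt_or_ge c 2 with h | h
    · interval_cases c
      · omega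
      · have := Fc_rec 1
        rw [Fc_one] at this
        push_cast at this
        linarith
    · have := Fc_rec c
      rw [ih h, mul_zero] at this
      have hc0 : ((c:ℚ)+1) ≠ 0 := by positivity
      rcases mul_eq_zero.mp this with h' | h'
      · exact absurd h' hc0
      · exact h'

/-- The explicit form of `ad_k^l(s)`. -/
noncomputable def iterF (r : ℕ) (i j : Fin r) (l : ℕ) : tvFormal r := fun m =>
  if m.1 = 1 then
    ((((-1:ℚ)^(l+1) * sseq l m.2) • (PowerSeries.X : PowerSeries ℚ) ^ (m.2+1)) •
      Matrix.single i j 1, 0)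
  else 0

lemma coefBrQ_zero_left {r : ℕ} (p q : ℕ × ℕ) (v' : tvCoefQ r) :
    coefBrQ (0 : tvCoefQ r) p v' q = 0 := by
  simp [coefBrQ, pairQ]

lemma coefBrQ_zero_right {r : ℕ} (p q : ℕ × ℕ) (v : tvCoefQ r) :
    coefBrQ v p (0 : tvCoefQ r) q = 0 := by
  simp [coefBrQ, pairQ]

lemma sElt_eq_iterF (r : ℕ) (i j : Fin r) : sElt r i j = iterF r i j 0 := by
  funext m
  obtain ⟨m1, m2⟩ := m
  simp only [sElt, iterF, Prod.mk.injEq]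
  by_cases h1 : m1 = 1
  · subst h1
    cases m2 with
    | zero => simp [sseq]
    | succ c => simp [sseq]; rfl
  · simp [h1]

lemma aux_mul (q α : ℚ) (a c : ℕ) :
    (-(q • (PowerSeries.X : PowerSeries ℚ)^a)) * (α • (PowerSeries.X : PowerSeries ℚ)^c) =
      (-(q*α)) • (PowerSeries.X : PowerSeries ℚ)^(a+c) := by
  rw [neg_mul, smul_mul_assoc, mul_smul_comm, smul_smul, ← pow_add, neg_smul]

lemma brFormal_step (r : ℕ) (i j : Fin r) (l : ℕ) :
    brFormal (kElt r) (iterF r i j l) = iterF r i j (l+1) := by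
  funext m
  obtain ⟨m1, m2⟩ := m
  simp only [brFormal]
  rw [Finset.sum_product]
  -- only p1 = 0 contributes
  rw [Finset.sum_eq_single_of_mem 0 (Finset.mem_range.mpr (by omega))
    (fun p1 _ hp1 => Finset.sum_eq_zero (fun p2 _ => by
      have hk : kElt r (p1, p2) = 0 := by
        simp only [kElt]; rw [if_neg]; simp only [not_and]; intro h; exact absurd h hp1
      rw [hk, coefBrQ_zero_left]))]
  simp only [Nat.sub_zero]
  by_cases h1 : m1 = 1
  · subst h1
    -- restrict to p2 ∈ Icc 1 m2
    rw [← Finset.sum_subset (show Finset.Icc 1 m2 ⊆ Finset.range (m2+1) by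
      intro b hb; simp only [Finset.mem_Icc] at hb; exact Finset.mem_range.mpr (by omega))
      (fun b hb hnb => by
        have hb0 : b = 0 := by
          simp only [Finset.mem_range] at hb; simp only [Finset.mem_Icc] at hnb; omega
        subst hb0
        have hk : kElt r (0, 0) = 0 := by simp [kElt]
        rw [hk, coefBrQ_zero_left])]
    have hterm : ∀ b ∈ Finset.Icc 1 m2,
        coefBrQ (kElt r (0, b)) (0, b) (iterF r i j l (1, m2 - b)) (1, m2 - b) =
          (((-( (b:ℚ)⁻¹ * ((-1:ℚ)^(l+1) * sseq l (m2-b)))) •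
              (PowerSeries.X : PowerSeries ℚ)^(m2+1)) • Matrix.single i j 1, 0) := by
      intro b hb
      simp only [Finset.mem_Icc] at hb
      have hk : kElt r (0, b) =
          (0, ![-((b : ℚ)⁻¹ • (PowerSeries.X : PowerSeries ℚ) ^ b), 0]) := by
        simp [kElt, hb.1]
      have hit : iterF r i j l (1, m2 - b) =
          ((((-1:ℚ)^(l+1) * sseq l (m2-b)) • (PowerSeries.X : PowerSeries ℚ) ^ ((m2-b)+1)) •
            Matrix.single i j 1, 0) := by
        simp [iterF]
      rw [hk, hit]
      simp only [coefBrQ, pairQ, Prod.fst, Prod.snd]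
      simp only [Matrix.cons_val_zero, Matrix.cons_val_one, Matrix.head_cons,
        Pi.zero_apply, mul_zero, zero_mul, add_zero, zero_add, Nat.cast_one, one_mul,
        smul_zero, zero_smul, sub_zero, zero_sub, mul_zero, Matrix.zero_mul, Matrix.mul_zero,
        neg_zero]
      rw [Prod.mk.injEq]
      refine ⟨?_, rfl⟩
      rw [smul_smul, aux_mul, show b + (m2 - b + 1) = m2 + 1 from by omega]
    rw [Finset.sum_congr rfl hterm]
    have hR : iterF r i j (l+1) (1, m2) =
        ((((-1:ℚ)^(l+2) * sseq (l+1) m2) • (PowerSeries.X : PowerSeries ℚ) ^ (m2+1)) •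
          Matrix.single i j 1, 0) := by simp [iterF]
    rw [hR, Prod.ext_iff]
    constructor
    · simp only [Prod.fst_sum, ← Finset.sum_smul]
      rw [sseq_succ, Finset.mul_sum]
      have hs : (∑ b ∈ Finset.Icc 1 m2, -((b:ℚ)⁻¹ * ((-1:ℚ)^(l+1) * sseq l (m2-b)))) =
          ∑ b ∈ Finset.Icc 1 m2, (-1:ℚ)^(l+2) * ((b:ℚ)⁻¹ * sseq l (m2-b)) :=
        Finset.sum_congr rfl fun b _ => by ring
      rw [hs]
    · simp [Prod.snd_sum]
  · -- m1 ≠ 1 : everything vanishes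
    have : ∀ p2 ∈ Finset.range (m2+1),
        coefBrQ (kElt r (0, p2)) (0, p2) (iterF r i j l (m1, m2 - p2)) (m1, m2 - p2) = 0 := by
      intro p2 _
      have hit : iterF r i j l (m1, m2 - p2) = 0 := by simp [iterF, h1]
      rw [hit, coefBrQ_zero_right]
    rw [Finset.sum_eq_zero this]
    simp [iterF, h1]

lemma iterate_eq (r : ℕ) (i j : Fin r) (l : ℕ) :
    (brFormal (kElt r))^[l] (sElt r i j) = iterF r i j l := by
  induction l with
  | zero => simpa using sElt_eq_iterF r i j
  | succ l ih => rw [Function.iterate_succ_apply', ih, brFormal_step]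

lemma scalar_sum (c : ℕ) :
    ∑ l ∈ Finset.range (c+1), ((l.factorial : ℚ))⁻¹ * ((-1:ℚ)^(l+1) * sseq l c) = -Fc c := by
  rw [Fc, ← Finset.sum_neg_distrib]
  exact Finset.sum_congr rfl fun l _ => by
    rw [div_eq_mul_inv]; ring

/-- Consistency of the Example-1 scattering diagram (the 2d–4d wall-crossing
formula `K_γ^ω ∘ S_{γ_{ij}}^μ = S_{γ_{ij}}^{μ'} ∘ S_{γ_{ij}+γ}^{μ'} ∘ K_γ^{ω'}`):
`Σ_{l≥0} (1/l!)·ad_k^l(s) = s + (t²·E_{ij}, 0)·z^{m+γ}`, where the infinite sum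
is interpreted via eventually-stabilizing partial sums in each monomial. -/
theorem exp_ad_k_s (r : ℕ) (hr : 1 ≤ r) (i j : Fin r) (hij : i ≠ j) :
    ∀ m : ℕ × ℕ, ∃ N : ℕ, ∀ L : ℕ, N ≤ L →
      (∑ l ∈ Finset.range L,
          ((Nat.factorial l : ℚ))⁻¹ • ((brFormal (kElt r))^[l] (sElt r i j))) m =
        ((sElt r i j +
          fun m' : ℕ × ℕ =>
            if m' = (1, 1) then
              (((PowerSeries.X : PowerSeries ℚ) ^ 2) • Matrix.single i j 1, 0)
            else 0 : tvFormal r)) m := by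
  intro m
  obtain ⟨m1, m2⟩ := m
  refine ⟨m2 + 1, fun L hL => ?_⟩
  rw [Finset.sum_apply]
  simp only [Pi.smul_apply, iterate_eq, Pi.add_apply]
  by_cases h1 : m1 = 1
  · subst h1
    rw [← Finset.sum_subset (Finset.range_subset_range.mpr hL)
      (fun l _ hl => by
        simp only [Finset.mem_range] at hl
        have hz : sseq l m2 = 0 := sseq_eq_zero_of_lt l m2 (by omega)
        simp [iterF, hz])]
    have hterm : ∀ l ∈ Finset.range (m2+1),
        ((l.factorial : ℚ))⁻¹ • iterF r i j l (1, m2) =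
          (((((l.factorial : ℚ))⁻¹ * ((-1:ℚ)^(l+1) * sseq l m2)) •
            (PowerSeries.X : PowerSeries ℚ)^(m2+1)) • Matrix.single i j 1, 0) := by
      intro l _
      have hit : iterF r i j l (1, m2) =
          ((((-1:ℚ)^(l+1) * sseq l m2) • (PowerSeries.X : PowerSeries ℚ)^(m2+1)) •
            Matrix.single i j 1, 0) := by simp [iterF]
      rw [hit, Prod.smul_mk, smul_zero, ← smul_assoc, smul_smul]
    rw [Finset.sum_congr rfl hterm]
    have hpair : ∑ l ∈ Finset.range (m2+1),
        ((((((l.factorial : ℚ))⁻¹ * ((-1:ℚ)^(l+1) * sseq l m2)) •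
          (PowerSeries.X : PowerSeries ℚ)^(m2+1)) • Matrix.single i j 1,
            (0 : Fin 2 → PowerSeries ℚ)) : tvCoefQ r) =
        ((((-Fc m2) • (PowerSeries.X : PowerSeries ℚ)^(m2+1)) •
          Matrix.single i j 1, 0) : tvCoefQ r) := by
      rw [Prod.ext_iff]
      constructor
      · simp only [Prod.fst_sum, ← Finset.sum_smul]
        rw [scalar_sum]
      · simp [Prod.snd_sum]
    rw [hpair]
    match m2 with
    | 0 =>
      rw [Fc_zero]
      have hs : sElt r i j (1, 0) =
          (-((PowerSeries.X : PowerSeries ℚ) • Matrix.single i j 1), 0) := by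
        simp [sElt]
      rw [hs, if_neg (by simp)]
      rw [Prod.ext_iff]
      constructor
      · simp only [Prod.fst, Prod.snd]
        rw [pow_one]
        simp [neg_smul, one_smul]
      · simp
    | 1 =>
      rw [Fc_one]
      have hs : sElt r i j (1, 1) = 0 := by
        simp only [sElt]; rw [if_neg (by simp [Prod.ext_iff])]
      rw [hs, if_pos rfl, zero_add, show -(-1 : ℚ) = 1 from by norm_num, one_smul]
    | (c+2) =>
      rw [Fc_eq_zero (c+2) (by omega)]
      have hs : sElt r i j (1, c+2) = 0 := by
        simp only [sElt]; rw [if_neg (by simp [Prod.ext_iff])]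
      rw [hs, if_neg (by simp), add_zero]
      simp
  · have hz : ∀ l ∈ Finset.range L, ((l.factorial : ℚ))⁻¹ • iterF r i j l (m1, m2) = 0 := by
      intro l _
      simp [iterF, h1]
    rw [Finset.sum_eq_zero hz]
    have hs : sElt r i j (m1, m2) = 0 := by
      simp only [sElt]; rw [if_neg]; simp [Prod.ext_iff, h1]
    rw [hs, if_neg (by simp [Prod.ext_iff, h1]), add_zero]
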